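/- Let A_{ij} ∈ M_m (1 ≤ i,j ≤ N) and consider x = ∑_{ij} A_{ij} ⊗ |ij⟩ ∈ M_m ⊗ (RC_N ⊗_min RC_N), where RC_N = R_N ∩ C_N. Then ‖x‖ = max of the four quantities: ‖∑_{ij} A_{ij}A_{ij}†‖^{1/2}, ‖∑_{ij} A_{ij}†A_{ij}‖^{1/2}, ‖∑_{ij} A_{ij} ⊗ |i⟩⟨j|‖_{M_m⊗M_N}, and ‖∑_{ij} A_{ij} ⊗ |j⟩⟨i|‖_{M_m⊗M_N}. -/

import Mathlib

open scoped BigOperators Matrix Kronecker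
open scoped Matrix.Norms.L2Operator

/-- The operator norm (`ℓ²→ℓ²`) of a complex matrix. -/
noncomputable def matOpNorm {ι : Type*} [Fintype ι] [DecidableEq ι] (A : Matrix ι ι ℂ) : ℝ :=
  ‖Matrix.toEuclideanCLM (𝕜 := ℂ) A‖

/-- The row embedding `|i⟩ ↦ |0⟩⟨i|` of `R_N` into `M_N`. -/
noncomputable def rowEmb {N : ℕ} [NeZero N] (i : Fin N) : Matrix (Fin N) (Fin N) ℂ :=
  Matrix.single 0 i 1

/-- The column embedding `|i⟩ ↦ |i⟩⟨0|` of `C_N` into `M_N`. -/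
noncomputable def colEmb {N : ℕ} [NeZero N] (i : Fin N) : Matrix (Fin N) (Fin N) ℂ :=
  Matrix.single i 0 1


lemma sum_of_inj {α β M : Type*} [Fintype α] [Fintype β] [DecidableEq β] [AddCommMonoid M]
    (g : α → β) (hg : Function.Injective g) (v : β → M)
    (hv : ∀ z, (∀ a, z ≠ g a) → v z = 0) :
    ∑ z, v z = ∑ a, v (g a) := by
  have h1 : ∑ z, v z = ∑ z ∈ Finset.univ.image g, v z := by
    refine (Finset.sum_subset (Finset.subset_univ _) ?_).symm
    intro z _ hz
    refine hv z fun a h => hz ?_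
    exact h ▸ Finset.mem_image_of_mem g (Finset.mem_univ a)
  rw [h1, Finset.sum_image (fun a _ b _ h => hg h)]

lemma enorm {ι : Type*} [Fintype ι] (v : ι → ℂ) :
    ‖(EuclideanSpace.equiv ι ℂ).symm v‖ = Real.sqrt (∑ i, ‖v i‖ ^ 2) := by
  rw [EuclideanSpace.norm_eq]; rfl

lemma l2_opNorm_embed {k l k' l' : Type*} [Fintype k] [Fintype l] [Fintype k'] [Fintype l']
    [DecidableEq l] [DecidableEq l'] [DecidableEq k']
    (M : Matrix k l ℂ) (M' : Matrix k' l' ℂ)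
    (f : k → k') (e : l → l') (hf : Function.Injective f) (he : Function.Injective e)
    (hM : ∀ a b, M' (f a) (e b) = M a b)
    (hrow : ∀ x y, (∀ a, x ≠ f a) → M' x y = 0)
    (hcol : ∀ x y, (∀ b, y ≠ e b) → M' x y = 0) :
    ‖M'‖ = ‖M‖ := by
  classical
  apply le_antisymm
  · rw [Matrix.l2_opNorm_def M']
    refine ContinuousLinearMap.opNorm_le_bound _ (norm_nonneg M) fun x' => ?_
    set u : EuclideanSpace ℂ l := (EuclideanSpace.equiv l ℂ).symm (fun b => x' (e b)) with hu
    have hmv : ∀ a, (M' *ᵥ ⇑x') (f a) = (M *ᵥ ⇑u) a := by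
      intro a
      show ∑ z, M' (f a) z * x' z = ∑ b, M a b * u b
      rw [sum_of_inj e he _ (fun z hz => by rw [hcol _ z hz, zero_mul])]
      exact Finset.sum_congr rfl fun b _ => by rw [hM]; rfl
    have hmv0 : ∀ y, (∀ a, y ≠ f a) → (M' *ᵥ ⇑x') y = 0 := by
      intro y hy
      show ∑ z, M' y z * x' z = 0
      exact Finset.sum_eq_zero fun z _ => by rw [hrow y z hy, zero_mul]
    have key : ‖(EuclideanSpace.equiv k' ℂ).symm (M' *ᵥ ⇑x')‖
        = ‖(EuclideanSpace.equiv k ℂ).symm (M *ᵥ ⇑u)‖ := by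
      rw [_root_.enorm, _root_.enorm]
      congr 1
      rw [sum_of_inj f hf _ (fun y hy => by rw [hmv0 y hy]; simp)]
      exact Finset.sum_congr rfl fun a _ => by rw [hmv]
    have happ : (Matrix.toEuclideanLin.trans LinearMap.toContinuousLinearMap) M' x'
        = (EuclideanSpace.equiv k' ℂ).symm (M' *ᵥ ⇑x') := rfl
    rw [happ, key]
    calc ‖(EuclideanSpace.equiv k ℂ).symm (M *ᵥ ⇑u)‖ ≤ ‖M‖ * ‖u‖ :=
          Matrix.l2_opNorm_mulVec M u
      _ ≤ ‖M‖ * ‖x'‖ := by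
          refine mul_le_mul_of_nonneg_left ?_ (norm_nonneg _)
          rw [hu, _root_.enorm, EuclideanSpace.norm_eq]
          refine Real.sqrt_le_sqrt ?_
          calc ∑ b, ‖x' (e b)‖ ^ 2
              = ∑ z ∈ Finset.univ.image e, ‖x' z‖ ^ 2 :=
                (Finset.sum_image (g := e) (f := fun z => ‖x' z‖ ^ 2) (fun a _ b _ h => he h)).symm
            _ ≤ ∑ z, ‖x' z‖ ^ 2 := Finset.sum_le_sum_of_subset_of_nonneg
                (Finset.subset_univ _) (fun z _ _ => by positivity)
  · rw [Matrix.l2_opNorm_def M]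
    refine ContinuousLinearMap.opNorm_le_bound _ (norm_nonneg M') fun x => ?_
    set x' : EuclideanSpace ℂ l' :=
      (EuclideanSpace.equiv l' ℂ).symm
        (fun z => if h : ∃ b, z = e b then x h.choose else 0) with hx'
    have hx'e : ∀ b, x' (e b) = x b := by
      intro b
      have h : ∃ b', e b = e b' := ⟨b, rfl⟩
      show (if h : ∃ b', e b = e b' then x h.choose else 0) = x b
      rw [dif_pos h]
      have : b = h.choose := he h.choose_spec
      rw [← this]
    have hx'0 : ∀ z, (∀ b, z ≠ e b) → x' z = 0 := by
      intro z hz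
      show (if h : ∃ b, z = e b then x h.choose else 0) = 0
      rw [dif_neg]
      rintro ⟨b, hb⟩
      exact hz b hb
    have hnx : ‖x'‖ = ‖x‖ := by
      rw [hx', _root_.enorm, EuclideanSpace.norm_eq]
      congr 1
      rw [sum_of_inj e he _ (fun z hz => by
        rw [show (if h : ∃ b, z = e b then x h.choose else 0) = 0 from hx'0 z hz]; simp)]
      exact Finset.sum_congr rfl fun b _ => congrArg (fun t => ‖t‖ ^ 2) (hx'e b)
    have hmv : ∀ a, (M' *ᵥ ⇑x') (f a) = (M *ᵥ ⇑x) a := by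
      intro a
      show ∑ z, M' (f a) z * x' z = ∑ b, M a b * x b
      rw [sum_of_inj e he _ (fun z hz => by rw [hx'0 z hz, mul_zero])]
      exact Finset.sum_congr rfl fun b _ => by rw [hM, hx'e]
    have hmv0 : ∀ y, (∀ a, y ≠ f a) → (M' *ᵥ ⇑x') y = 0 := by
      intro y hy
      show ∑ z, M' y z * x' z = 0
      exact Finset.sum_eq_zero fun z _ => by rw [hrow y z hy, zero_mul]
    have happ : (Matrix.toEuclideanLin.trans LinearMap.toContinuousLinearMap) M x
        = (EuclideanSpace.equiv k ℂ).symm (M *ᵥ ⇑x) := rfl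
    rw [happ]
    have key : ‖(EuclideanSpace.equiv k ℂ).symm (M *ᵥ ⇑x)‖
        = ‖(EuclideanSpace.equiv k' ℂ).symm (M' *ᵥ ⇑x')‖ := by
      rw [_root_.enorm, _root_.enorm]
      congr 1
      rw [sum_of_inj f hf (fun y => ‖(M' *ᵥ ⇑x') y‖ ^ 2) (fun y hy => by dsimp only; rw [hmv0 y hy]; simp)]
      exact (Finset.sum_congr rfl fun a _ => by rw [hmv]).symm
    rw [key, ← hnx]
    exact Matrix.l2_opNorm_mulVec M' x'


variable {m N : ℕ} [NeZero N]

lemma eq_RR (A : Fin N → Fin N → Matrix (Fin m) (Fin m) ℂ) :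
    (∑ i, ∑ j, A i j ⊗ₖ (rowEmb i ⊗ₖ rowEmb j))
      = Matrix.of fun (x y : Fin m × Fin N × Fin N) =>
          if x.2.1 = 0 ∧ x.2.2 = 0 then A y.2.1 y.2.2 x.1 y.1 else 0 := by
  ext ⟨a, p⟩ ⟨b, q⟩
  simp [Matrix.sum_apply, rowEmb, Matrix.single, ite_and, eq_comm]
  try (split_ifs <;> simp_all)

lemma eq_RC (A : Fin N → Fin N → Matrix (Fin m) (Fin m) ℂ) :
    (∑ i, ∑ j, A i j ⊗ₖ (rowEmb i ⊗ₖ colEmb j))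
      = Matrix.of fun (x y : Fin m × Fin N × Fin N) =>
          if x.2.1 = 0 ∧ y.2.2 = 0 then A y.2.1 x.2.2 x.1 y.1 else 0 := by
  ext ⟨a, p⟩ ⟨b, q⟩
  simp [Matrix.sum_apply, rowEmb, colEmb, Matrix.single, ite_and, eq_comm]
  try (split_ifs <;> simp_all)

lemma eq_CR (A : Fin N → Fin N → Matrix (Fin m) (Fin m) ℂ) :
    (∑ i, ∑ j, A i j ⊗ₖ (colEmb i ⊗ₖ rowEmb j))
      = Matrix.of fun (x y : Fin m × Fin N × Fin N) =>
          if x.2.2 = 0 ∧ y.2.1 = 0 then A x.2.1 y.2.2 x.1 y.1 else 0 := by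
  ext ⟨a, p⟩ ⟨b, q⟩
  simp [Matrix.sum_apply, rowEmb, colEmb, Matrix.single, ite_and, eq_comm]
  try (split_ifs <;> simp_all)

lemma eq_CC (A : Fin N → Fin N → Matrix (Fin m) (Fin m) ℂ) :
    (∑ i, ∑ j, A i j ⊗ₖ (colEmb i ⊗ₖ colEmb j))
      = Matrix.of fun (x y : Fin m × Fin N × Fin N) =>
          if y.2.1 = 0 ∧ y.2.2 = 0 then A x.2.1 x.2.2 x.1 y.1 else 0 := by
  ext ⟨a, p⟩ ⟨b, q⟩
  simp [Matrix.sum_apply, colEmb, Matrix.single, ite_and, eq_comm]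
  try (split_ifs <;> simp_all)

omit [NeZero N] in
lemma eq_std (A : Fin N → Fin N → Matrix (Fin m) (Fin m) ℂ) :
    (∑ i, ∑ j, A i j ⊗ₖ Matrix.single i j (1:ℂ))
      = Matrix.of fun (x y : Fin m × Fin N) => A x.2 y.2 x.1 y.1 := by
  ext ⟨a, p⟩ ⟨b, q⟩
  simp [Matrix.sum_apply, Matrix.single, ite_and, eq_comm]

omit [NeZero N] in
lemma eq_std' (A : Fin N → Fin N → Matrix (Fin m) (Fin m) ℂ) :
    (∑ i, ∑ j, A i j ⊗ₖ Matrix.single j i (1:ℂ))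
      = Matrix.of fun (x y : Fin m × Fin N) => A y.2 x.2 x.1 y.1 := by
  ext ⟨a, p⟩ ⟨b, q⟩
  simp [Matrix.sum_apply, Matrix.single, ite_and, eq_comm]

lemma matOpNorm_norm {ι : Type*} [Fintype ι] [DecidableEq ι] (B : Matrix ι ι ℂ) :
    matOpNorm B = ‖B‖ := rfl

lemma matOpNorm_mul_conjT {ι : Type*} [Fintype ι] [DecidableEq ι] (B : Matrix ι ι ℂ) :
    matOpNorm B = Real.sqrt (matOpNorm (B * Bᴴ)) := by
  rw [matOpNorm_norm, matOpNorm_norm,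
    show B * Bᴴ = Bᴴᴴ * Bᴴ by rw [Matrix.conjTranspose_conjTranspose],
    Matrix.l2_opNorm_conjTranspose_mul_self, Matrix.l2_opNorm_conjTranspose,
    Real.sqrt_mul_self (norm_nonneg _)]

lemma matOpNorm_conjT_mul {ι : Type*} [Fintype ι] [DecidableEq ι] (B : Matrix ι ι ℂ) :
    matOpNorm B = Real.sqrt (matOpNorm (Bᴴ * B)) := by
  rw [matOpNorm_norm, matOpNorm_norm, Matrix.l2_opNorm_conjTranspose_mul_self,
    Real.sqrt_mul_self (norm_nonneg _)]

lemma L1_eq (A : Fin N → Fin N → Matrix (Fin m) (Fin m) ℂ) :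
    matOpNorm (∑ i, ∑ j, A i j ⊗ₖ (rowEmb i ⊗ₖ rowEmb j))
      = Real.sqrt (matOpNorm (∑ i, ∑ j, A i j * (A i j)ᴴ)) := by
  rw [matOpNorm_mul_conjT]
  congr 1
  rw [matOpNorm_norm, matOpNorm_norm, eq_RR]
  refine l2_opNorm_embed _ _
    (fun a : Fin m => (a, ((0:Fin N), (0:Fin N))))
    (fun a : Fin m => (a, ((0:Fin N), (0:Fin N)))) ?_ ?_ ?_ ?_ ?_
  · intro a b h; exact congrArg Prod.fst h
  · intro a b h; exact congrArg Prod.fst h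
  · intro a b
    simp only [Matrix.mul_apply, Matrix.conjTranspose_apply, Matrix.of_apply, Matrix.sum_apply,
      and_self, if_pos rfl]
    rw [Fintype.sum_prod_type, Finset.sum_comm, Fintype.sum_prod_type]
    simp
  · rintro ⟨a, p⟩ y hy
    have hcond : ¬((p.1 : Fin N) = 0 ∧ p.2 = 0) := by
      rintro ⟨h1, h2⟩
      exact hy a (by simp [Prod.ext_iff, h1, h2])
    simp only [Matrix.mul_apply, Matrix.of_apply, if_neg hcond, zero_mul]
    simp
  · rintro ⟨a, p⟩ ⟨b, q⟩ hq
    have hcond : ¬((q.1 : Fin N) = 0 ∧ q.2 = 0) := by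
      rintro ⟨h1, h2⟩
      exact hq b (by simp [Prod.ext_iff, h1, h2])
    simp only [Matrix.mul_apply, Matrix.conjTranspose_apply, Matrix.of_apply, if_neg hcond,
      star_zero, mul_zero]
    simp

lemma L4_eq (A : Fin N → Fin N → Matrix (Fin m) (Fin m) ℂ) :
    matOpNorm (∑ i, ∑ j, A i j ⊗ₖ (colEmb i ⊗ₖ colEmb j))
      = Real.sqrt (matOpNorm (∑ i, ∑ j, (A i j)ᴴ * A i j)) := by
  rw [matOpNorm_conjT_mul]
  congr 1
  rw [matOpNorm_norm, matOpNorm_norm, eq_CC]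
  refine l2_opNorm_embed _ _
    (fun a : Fin m => (a, ((0:Fin N), (0:Fin N))))
    (fun a : Fin m => (a, ((0:Fin N), (0:Fin N)))) ?_ ?_ ?_ ?_ ?_
  · intro a b h; exact congrArg Prod.fst h
  · intro a b h; exact congrArg Prod.fst h
  · intro a b
    simp only [Matrix.mul_apply, Matrix.conjTranspose_apply, Matrix.of_apply, Matrix.sum_apply,
      and_self, if_pos rfl]
    rw [Fintype.sum_prod_type, Finset.sum_comm, Fintype.sum_prod_type]
    simp
  · rintro ⟨a, p⟩ y hy
    have hcond : ¬((p.1 : Fin N) = 0 ∧ p.2 = 0) := by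
      rintro ⟨h1, h2⟩
      exact hy a (by simp [Prod.ext_iff, h1, h2])
    simp only [Matrix.mul_apply, Matrix.conjTranspose_apply, Matrix.of_apply, if_neg hcond,
      star_zero, zero_mul]
    simp
  · rintro ⟨a, p⟩ ⟨b, q⟩ hq
    have hcond : ¬((q.1 : Fin N) = 0 ∧ q.2 = 0) := by
      rintro ⟨h1, h2⟩
      exact hq b (by simp [Prod.ext_iff, h1, h2])
    simp only [Matrix.mul_apply, Matrix.of_apply, if_neg hcond, mul_zero]
    simp

lemma L2_eq (A : Fin N → Fin N → Matrix (Fin m) (Fin m) ℂ) :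
    matOpNorm (∑ i, ∑ j, A i j ⊗ₖ (rowEmb i ⊗ₖ colEmb j))
      = matOpNorm (∑ i, ∑ j, A i j ⊗ₖ Matrix.single j i (1:ℂ)) := by
  rw [matOpNorm_norm, matOpNorm_norm, eq_RC, eq_std']
  refine l2_opNorm_embed _ _
    (fun p : Fin m × Fin N => (p.1, ((0:Fin N), p.2)))
    (fun p : Fin m × Fin N => (p.1, (p.2, (0:Fin N)))) ?_ ?_ ?_ ?_ ?_
  · rintro ⟨a, j⟩ ⟨b, j'⟩ h
    simp only [Prod.mk.injEq] at h
    exact Prod.ext h.1 h.2.2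
  · rintro ⟨a, i⟩ ⟨b, i'⟩ h
    simp only [Prod.mk.injEq] at h
    exact Prod.ext h.1 h.2.1
  · rintro ⟨a, j⟩ ⟨b, i⟩
    simp
  · rintro ⟨a, p⟩ y hy
    have hcond : (p.1 : Fin N) ≠ 0 := fun h1 => hy (a, p.2) (by simp [Prod.ext_iff, h1])
    simp [Matrix.of_apply, hcond]
  · rintro x ⟨b, q⟩ hq
    have hcond : (q.2 : Fin N) ≠ 0 := fun h2 => hq (b, q.1) (by simp [Prod.ext_iff, h2])
    simp [Matrix.of_apply, hcond]

lemma L3_eq (A : Fin N → Fin N → Matrix (Fin m) (Fin m) ℂ) :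
    matOpNorm (∑ i, ∑ j, A i j ⊗ₖ (colEmb i ⊗ₖ rowEmb j))
      = matOpNorm (∑ i, ∑ j, A i j ⊗ₖ Matrix.single i j (1:ℂ)) := by
  rw [matOpNorm_norm, matOpNorm_norm, eq_CR, eq_std]
  refine l2_opNorm_embed _ _
    (fun p : Fin m × Fin N => (p.1, (p.2, (0:Fin N))))
    (fun p : Fin m × Fin N => (p.1, ((0:Fin N), p.2))) ?_ ?_ ?_ ?_ ?_
  · rintro ⟨a, j⟩ ⟨b, j'⟩ h
    simp only [Prod.mk.injEq] at h
    exact Prod.ext h.1 h.2.1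
  · rintro ⟨a, i⟩ ⟨b, i'⟩ h
    simp only [Prod.mk.injEq] at h
    exact Prod.ext h.1 h.2.2
  · rintro ⟨a, i⟩ ⟨b, j⟩
    simp
  · rintro ⟨a, p⟩ y hy
    have hcond : (p.2 : Fin N) ≠ 0 := fun h1 => hy (a, p.1) (by simp [Prod.ext_iff, h1])
    simp [Matrix.of_apply, hcond]
  · rintro x ⟨b, q⟩ hq
    have hcond : (q.1 : Fin N) ≠ 0 := fun h2 => hq (b, q.2) (by simp [Prod.ext_iff, h2])
    simp [Matrix.of_apply, hcond]

/-- The norm of `x = ∑ A_{ij} ⊗ |ij⟩` in `M_m ⊗_min (RC_N ⊗_min RC_N)` (computed via the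
four concrete representations `R⊗R, R⊗C, C⊗R, C⊗C` into matrix algebras) equals the maximum
of `‖∑ A A†‖^{1/2}`, `‖∑ A†A‖^{1/2}`, `‖∑ A_{ij} ⊗ |i⟩⟨j|‖` and `‖∑ A_{ij} ⊗ |j⟩⟨i|‖`. -/
theorem mm_rc2_norm_eq (m N : ℕ) [NeZero N] (A : Fin N → Fin N → Matrix (Fin m) (Fin m) ℂ) :
    max
      (max (matOpNorm (∑ i, ∑ j, A i j ⊗ₖ (rowEmb i ⊗ₖ rowEmb j)))
           (matOpNorm (∑ i, ∑ j, A i j ⊗ₖ (rowEmb i ⊗ₖ colEmb j))))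
      (max (matOpNorm (∑ i, ∑ j, A i j ⊗ₖ (colEmb i ⊗ₖ rowEmb j)))
           (matOpNorm (∑ i, ∑ j, A i j ⊗ₖ (colEmb i ⊗ₖ colEmb j)))) =
    max
      (max (Real.sqrt (matOpNorm (∑ i, ∑ j, A i j * (A i j)ᴴ)))
           (Real.sqrt (matOpNorm (∑ i, ∑ j, (A i j)ᴴ * A i j))))
      (max (matOpNorm (∑ i, ∑ j, A i j ⊗ₖ Matrix.single i j (1 : ℂ)))
           (matOpNorm (∑ i, ∑ j, A i j ⊗ₖ Matrix.single j i (1 : ℂ)))) := by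
  rw [L1_eq, L2_eq, L3_eq, L4_eq]
  rw [max_comm (matOpNorm (∑ i, ∑ j, A i j ⊗ₖ Matrix.single i j (1 : ℂ))), max_max_max_comm,
    max_comm (matOpNorm (∑ i, ∑ j, A i j ⊗ₖ Matrix.single j i (1 : ℂ)))]
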